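/- (i) For every positive integer i with i ≡ 2 (mod 4), there is no quasi-symmetric 2-(2i(2i+1), i(2i+1), i(2i−1)(i+1)) design with block intersection numbers i² + i and i². (ii) For every positive integer i with i ≡ 4 (mod 8), there is no quasi-symmetric 2-(d, k, λ) design with block intersection numbers s₁ and s₂, where d = i(i³ + 6i² + 11i + 5), k = i(i³ + 5i² + 7i + 1)/2, λ = i(i+2)(i² + 2i − 1)(i³ + 5i² + 7i + 1)/4, s₁ = i(i+2)(i+1)²/4 and s₂ = i(i³ + 4i² + 3i − 4)/4. -/
import Mathlib


open Finset

private lemma zmod2_eq_zero (m : ℕ) : ((m : ZMod 2) = 0) ↔ m % 2 = 0 := by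
  rw [ZMod.natCast_eq_zero_iff]
  omega

private lemma zmod2_eq_one (m : ℕ) : ((m : ZMod 2) = 1) ↔ m % 2 = 1 := by
  rcases Nat.mod_two_eq_zero_or_one m with h0 | h0
  · have h1 : (m : ZMod 2) = 0 := (zmod2_eq_zero m).2 h0
    rw [h1]
    constructor
    · intro h; exact absurd h (by decide)
    · intro h; omega
  · have h2 : ((m % 2 : ℕ) : ZMod 2) = (m : ZMod 2) := ZMod.natCast_mod m 2
    rw [h0] at h2
    push_cast at h2
    rw [← h2]
    simp [h0]

private lemma oddsq8 (m : ℕ) (h : m % 2 = 1) : ((m : ZMod 8))^2 = 1 := by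
  obtain ⟨j, hj⟩ : ∃ j, m = 2*j + 1 := ⟨m/2, by omega⟩
  obtain ⟨e, he⟩ : ∃ e, j * (j+1) = 2 * e := (Nat.even_mul_succ_self j).elim (fun x hx => ⟨x, by omega⟩)
  have hm2 : m^2 = 8*e + 1 := by
    have : m^2 = 4*(j*(j+1)) + 1 := by rw [hj]; ring
    rw [this, he]; ring
  calc ((m : ZMod 8))^2 = ((m^2 : ℕ) : ZMod 8) := by push_cast; ring
    _ = ((8*e + 1 : ℕ) : ZMod 8) := by rw [hm2]
    _ = 1 := by push_cast; rw [show ((8 : ZMod 8)) = 0 by decide]; ring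

private lemma inter_card_eq_sum {n : ℕ} (B B' : Finset (Fin n)) :
    (B ∩ B').card = ∑ a : Fin n, (if a ∈ B ∧ a ∈ B' then 1 else 0) := by
  rw [← Finset.card_filter]
  congr 1
  ext a
  simp [Finset.mem_inter]

private lemma even_dependency {n k : ℕ} (𝓑 T : Finset (Finset (Fin n)))
    (hT : T ⊆ 𝓑)
    (hcard : ∀ B ∈ 𝓑, B.card = k)
    (hk4 : k % 4 = 2)
    (hint : ∀ B₁ ∈ 𝓑, ∀ B₂ ∈ 𝓑, B₁ ≠ B₂ → (B₁ ∩ B₂).card % 2 = 0)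
    (hdeg : ∀ a : Fin n, ((T.filter fun B => a ∈ B).card) % 2 = 0) :
    T.card % 2 = 0 := by
  classical
  have key : (∑ a : Fin n, ((T.filter fun B => a ∈ B).card)^2)
      = k * T.card + ∑ p ∈ T.offDiag, (p.1 ∩ p.2).card := by
    calc (∑ a : Fin n, ((T.filter fun B => a ∈ B).card)^2)
        = ∑ a : Fin n, ∑ p ∈ T ×ˢ T,
            ((if a ∈ p.1 then 1 else 0) * (if a ∈ p.2 then 1 else 0)) := by
          refine Finset.sum_congr rfl fun a _ => ?_
          rw [Finset.card_filter, pow_two, Finset.sum_mul_sum]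
          rw [← Finset.sum_product']
      _ = ∑ p ∈ T ×ˢ T, ∑ a : Fin n,
            ((if a ∈ p.1 then 1 else 0) * (if a ∈ p.2 then 1 else 0)) := Finset.sum_comm
      _ = ∑ p ∈ T ×ˢ T, (p.1 ∩ p.2).card := by
          refine Finset.sum_congr rfl fun p _ => ?_
          rw [inter_card_eq_sum]
          refine Finset.sum_congr rfl fun a _ => ?_
          by_cases h1 : a ∈ p.1 <;> by_cases h2 : a ∈ p.2 <;> simp [h1, h2]
      _ = k * T.card + ∑ p ∈ T.offDiag, (p.1 ∩ p.2).card := by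
          rw [← Finset.diag_union_offDiag T,
            Finset.sum_union (Finset.disjoint_diag_offDiag T), Finset.sum_diag]
          congr 1
          have h3 : ∀ B ∈ T, (((B, B).1 ∩ (B, B).2).card) = k := fun B hB => by
            simp only [Finset.inter_self]
            exact hcard B (hT hB)
          rw [Finset.sum_congr rfl h3, Finset.sum_const, smul_eq_mul, mul_comm]
  -- LHS divisible by 4
  have hLd : 4 ∣ (∑ a : Fin n, ((T.filter fun B => a ∈ B).card)^2) := by
    refine Finset.dvd_sum fun a _ => ?_
    obtain ⟨m, hm⟩ : ∃ m, (T.filter fun B => a ∈ B).card = 2*m := ⟨(T.filter fun B => a ∈ B).card / 2, by have := hdeg a; omega⟩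
    exact ⟨m^2, by rw [hm]; ring⟩
  -- offDiag sum divisible by 4
  have hSd : 4 ∣ (∑ p ∈ T.offDiag, (p.1 ∩ p.2).card) := by
    have hcast : ((∑ p ∈ T.offDiag, (p.1 ∩ p.2).card : ℕ) : ZMod 4) = 0 := by
      push_cast
      refine Finset.sum_involution (fun p _ => (p.2, p.1)) ?_ ?_ ?_ ?_
      · intro p hp
        rw [Finset.mem_offDiag] at hp
        have hev : (p.1 ∩ p.2).card % 2 = 0 := hint _ (hT hp.1) _ (hT hp.2.1) hp.2.2
        obtain ⟨m, hm⟩ : ∃ m, (p.1 ∩ p.2).card = 2 * m := ⟨(p.1 ∩ p.2).card / 2, by omega⟩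
        have h21 : ((p.2, p.1).1 ∩ (p.2, p.1).2).card = (p.1 ∩ p.2).card := by
          simp [Finset.inter_comm]
        rw [h21, hm, ← Nat.cast_add, show 2*m + 2*m = 4*m by ring]
        push_cast
        rw [show ((4 : ZMod 4)) = 0 by decide, zero_mul]
      · intro p hp _
        rw [Finset.mem_offDiag] at hp
        intro hgp
        exact hp.2.2 (congrArg Prod.fst hgp).symm
      · intro p hp
        rw [Finset.mem_offDiag] at hp ⊢
        exact ⟨hp.2.1, hp.1, Ne.symm hp.2.2⟩
      · intro p hp
        rfl
    rw [ZMod.natCast_eq_zero_iff] at hcast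
    exact hcast
  have h4 : 4 ∣ k * T.card := by
    have hsub := Nat.dvd_sub hLd hSd
    rwa [key, Nat.add_sub_cancel] at hsub
  obtain ⟨u, hu⟩ : ∃ u, k = 4*u + 2 := ⟨k/4, by omega⟩
  obtain ⟨c, hc⟩ := h4
  have hw : 2 * T.card + 4*(u*T.card) = 4 * c := by rw [← hc, hu]; ring
  omega

private lemma zmod2_ne_zero : ∀ x : ZMod 2, x ≠ 0 → x = 1 := by decide

private lemma exists_odd_transversal {n k : ℕ} (𝓑 : Finset (Finset (Fin n)))
    (hcard : ∀ B ∈ 𝓑, B.card = k)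
    (hk4 : k % 4 = 2)
    (hint : ∀ B₁ ∈ 𝓑, ∀ B₂ ∈ 𝓑, B₁ ≠ B₂ → (B₁ ∩ B₂).card % 2 = 0) :
    ∃ P : Finset (Fin n), ∀ B ∈ 𝓑, ((B ∩ P).card) % 2 = 1 := by
  classical
  haveI : Fact (Nat.Prime 2) := ⟨Nat.prime_two⟩
  set v : Fin n → ({B // B ∈ 𝓑} → ZMod 2) := fun a B => if a ∈ B.1 then 1 else 0 with hv
  set D : Submodule (ZMod 2) ({B // B ∈ 𝓑} → ZMod 2) :=
    Submodule.span (ZMod 2) (Set.range v) with hD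
  have hone : ∀ x : ZMod 2, x ≠ 0 → x = 1 := zmod2_ne_zero
  have hj : (fun _ => 1 : {B // B ∈ 𝓑} → ZMod 2) ∈ D := by
    by_contra hnot
    have hq : D.mkQ (fun _ => 1) ≠ 0 := by
      rw [Submodule.mkQ_apply, ne_eq, Submodule.Quotient.mk_eq_zero]
      exact hnot
    obtain ⟨φ, hφ⟩ : ∃ φ : Module.Dual (ZMod 2) (({B // B ∈ 𝓑} → ZMod 2) ⧸ D),
        φ (D.mkQ (fun _ => 1)) ≠ 0 := by
      by_contra h
      push_neg at h
      exact hq ((Module.forall_dual_apply_eq_zero_iff (ZMod 2) _).1 h)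
    set f : ({B // B ∈ 𝓑} → ZMod 2) →ₗ[ZMod 2] ZMod 2 := φ.comp D.mkQ with hf
    have hfv : ∀ a, f (v a) = 0 := by
      intro a
      have hmem : v a ∈ D := Submodule.subset_span ⟨a, rfl⟩
      have : D.mkQ (v a) = 0 := by
        rw [Submodule.mkQ_apply, Submodule.Quotient.mk_eq_zero]; exact hmem
      simp [hf, LinearMap.comp_apply, this]
    have hfj : f (fun _ => 1) = 1 := hone _ hφ
    set z : {B // B ∈ 𝓑} → ZMod 2 := fun B => f (fun C => if B = C then 1 else 0) with hz
    have hexp : ∀ y : {B // B ∈ 𝓑} → ZMod 2, f y = ∑ B : {B // B ∈ 𝓑}, y B * z B := by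
      intro y
      rw [LinearMap.pi_apply_eq_sum_univ f y]
      refine Finset.sum_congr rfl fun B _ => ?_
      rw [smul_eq_mul]
    set T0 : Finset {B // B ∈ 𝓑} := Finset.univ.filter (fun B => z B = 1) with hT0
    set T : Finset (Finset (Fin n)) := T0.image Subtype.val with hT
    have hTsub : T ⊆ 𝓑 := by
      intro B hB
      rw [hT] at hB
      obtain ⟨C, _, rfl⟩ := Finset.mem_image.1 hB
      exact C.2
    have hcardT : T.card = T0.card := Finset.card_image_of_injective T0 Subtype.val_injective
    -- each sum over subtype as filter card
    have hsum_card : ∀ (q : {B // B ∈ 𝓑} → Prop) [DecidablePred q],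
        (∑ B : {B // B ∈ 𝓑}, (if q B then (1 : ZMod 2) else 0))
          = ((Finset.univ.filter q).card : ZMod 2) := by
      intro q _
      rw [Finset.card_filter]
      push_cast
      refine Finset.sum_congr rfl fun B _ => ?_
      by_cases h : q B <;> simp [h]
    have hdeg : ∀ a : Fin n, ((T.filter fun B => a ∈ B).card) % 2 = 0 := by
      intro a
      have h0 : f (v a) = 0 := hfv a
      rw [hexp] at h0
      have h1 : (∑ B : {B // B ∈ 𝓑}, v a B * z B)
          = ((Finset.univ.filter (fun B : {B // B ∈ 𝓑} => a ∈ B.1 ∧ z B = 1)).card : ZMod 2) := by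
        rw [← hsum_card]
        refine Finset.sum_congr rfl fun B _ => ?_
        have hzB : z B = 0 ∨ z B = 1 := by
          rcases eq_or_ne (z B) 0 with h | h
          · exact Or.inl h
          · exact Or.inr (hone _ h)
        by_cases h1 : a ∈ B.1 <;> rcases hzB with h2 | h2 <;> simp [hv, h1, h2]
      rw [h1] at h0
      have h2 : (T.filter fun B => a ∈ B) =
          (T0.filter (fun B : {B // B ∈ 𝓑} => a ∈ B.1)).image Subtype.val := by
        rw [hT, Finset.filter_image]
      have h3 : ((T.filter fun B => a ∈ B).card)
          = (Finset.univ.filter (fun B : {B // B ∈ 𝓑} => a ∈ B.1 ∧ z B = 1)).card := by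
        rw [h2, Finset.card_image_of_injective _ Subtype.val_injective, hT0,
          Finset.filter_filter]
        congr 1
        ext B
        simp [and_comm]
      rw [h3]
      exact (zmod2_eq_zero _).1 h0
    have heven := even_dependency 𝓑 T hTsub hcard hk4 hint hdeg
    -- but f j = 1 gives odd
    have hodd : (T0.card : ZMod 2) = 1 := by
      have hsum_eq : (∑ B : {B // B ∈ 𝓑}, (if z B = 1 then (1 : ZMod 2) else 0))
          = ∑ B : {B // B ∈ 𝓑}, 1 * z B := by
        refine Finset.sum_congr rfl fun B _ => ?_
        have hzB : z B = 0 ∨ z B = 1 := by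
          rcases eq_or_ne (z B) 0 with h | h
          · exact Or.inl h
          · exact Or.inr (hone _ h)
        rcases hzB with h2 | h2 <;> rw [h2] <;> simp
      calc (T0.card : ZMod 2)
          = ∑ B : {B // B ∈ 𝓑}, (if z B = 1 then (1 : ZMod 2) else 0) :=
            (hsum_card (fun B => z B = 1)).symm
        _ = ∑ B : {B // B ∈ 𝓑}, 1 * z B := hsum_eq
        _ = f (fun _ => 1) := (hexp _).symm
        _ = 1 := hfj
    rw [zmod2_eq_one] at hodd
    rw [hcardT] at heven
    omega
  -- extract coefficients
  rw [hD, Submodule.mem_span_range_iff_exists_fun] at hj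
  obtain ⟨c, hc⟩ := hj
  refine ⟨Finset.univ.filter (fun a => c a = 1), ?_⟩
  intro B hB
  have hB1 := congrFun hc ⟨B, hB⟩
  rw [Finset.sum_apply] at hB1
  have h1 : (∑ a : Fin n, (c a • v a) ⟨B, hB⟩)
      = ((Finset.univ.filter (fun a : Fin n => a ∈ B ∧ c a = 1)).card : ZMod 2) := by
    rw [Finset.card_filter]
    push_cast
    refine Finset.sum_congr rfl fun a _ => ?_
    simp only [Pi.smul_apply, smul_eq_mul, hv]
    have hca : c a = 0 ∨ c a = 1 := by
      rcases eq_or_ne (c a) 0 with h | h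
      · exact Or.inl h
      · exact Or.inr (hone _ h)
    by_cases h1 : a ∈ B <;> rcases hca with h2 | h2 <;> simp [h1, h2]
  rw [h1] at hB1
  have h2 : B ∩ (Finset.univ.filter (fun a => c a = 1))
      = Finset.univ.filter (fun a : Fin n => a ∈ B ∧ c a = 1) := by
    ext a
    simp [Finset.mem_inter]
  rw [h2]
  exact (zmod2_eq_one _).1 hB1


private lemma point_degree {n k K N lam r : ℕ} (𝓑 : Finset (Finset (Fin n)))
    (hn : n = N + 1) (hk : k = K + 1) (hK : 0 < K)
    (hcard : ∀ B ∈ 𝓑, B.card = k)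
    (hpair : ∀ p : Finset (Fin n), p.card = 2 → (𝓑.filter fun B => p ⊆ B).card = lam)
    (hrK : r * K = lam * N) :
    ∀ a : Fin n, (𝓑.filter fun B => a ∈ B).card = r := by
  intro a
  classical
  have key : (𝓑.filter fun B => a ∈ B).card * K = N * lam := by
    calc (𝓑.filter fun B => a ∈ B).card * K
        = ∑ B ∈ 𝓑.filter (fun B => a ∈ B), K := by rw [Finset.sum_const, smul_eq_mul]
      _ = ∑ B ∈ 𝓑.filter (fun B => a ∈ B), (B.erase a).card := by
          refine Finset.sum_congr rfl fun B hB => ?_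
          rw [Finset.mem_filter] at hB
          rw [Finset.card_erase_of_mem hB.2, hcard B hB.1, hk]
          omega
      _ = ∑ B ∈ 𝓑.filter (fun B => a ∈ B), ∑ q ∈ Finset.univ.erase a,
            (if q ∈ B then 1 else 0) := by
          refine Finset.sum_congr rfl fun B hB => ?_
          rw [← Finset.card_filter]
          congr 1
          ext q
          simp only [Finset.mem_erase, Finset.mem_filter, Finset.mem_univ, true_and]
          tauto
      _ = ∑ q ∈ Finset.univ.erase a, ∑ B ∈ 𝓑.filter (fun B => a ∈ B),
            (if q ∈ B then 1 else 0) := Finset.sum_comm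
      _ = ∑ q ∈ Finset.univ.erase a, lam := by
          refine Finset.sum_congr rfl fun q hq => ?_
          rw [Finset.mem_erase] at hq
          rw [← Finset.card_filter, Finset.filter_filter]
          have hfe : 𝓑.filter (fun B => a ∈ B ∧ q ∈ B) = 𝓑.filter (fun B => {a, q} ⊆ B) := by
            apply Finset.filter_congr
            intro B _
            simp [Finset.insert_subset_iff]
          rw [hfe]
          exact hpair {a, q} (by rw [Finset.card_insert_of_notMem (by simp [Ne.symm hq.1]), Finset.card_singleton])
      _ = N * lam := by
          rw [Finset.sum_const, smul_eq_mul]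
          congr 1
          rw [Finset.card_erase_of_mem (Finset.mem_univ a), Finset.card_univ, Fintype.card_fin]
          omega
  have : (𝓑.filter fun B => a ∈ B).card * K = r * K := by rw [key, hrK, mul_comm lam N]
  exact Nat.eq_of_mul_eq_mul_right hK this

private lemma block_count {n k K N lam : ℕ} (𝓑 : Finset (Finset (Fin n)))
    (hn : n = N + 1) (hk : k = K + 1)
    (hcard : ∀ B ∈ 𝓑, B.card = k)
    (hpair : ∀ p : Finset (Fin n), p.card = 2 → (𝓑.filter fun B => p ⊆ B).card = lam) :
    𝓑.card * (k * K) = lam * (n * N) := by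
  classical
  calc 𝓑.card * (k * K)
      = ∑ B ∈ 𝓑, (k * K) := by rw [Finset.sum_const, smul_eq_mul]
    _ = ∑ B ∈ 𝓑, B.offDiag.card := by
        refine Finset.sum_congr rfl fun B hB => ?_
        rw [Finset.offDiag_card, hcard B hB, hk]
        have : (K+1) * (K+1) = (K+1)*K + (K+1) := by ring
        rw [this, Nat.add_sub_cancel]
    _ = ∑ B ∈ 𝓑, ∑ p ∈ Finset.univ.offDiag, (if p.1 ∈ B ∧ p.2 ∈ B then 1 else 0) := by
        refine Finset.sum_congr rfl fun B hB => ?_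
        rw [← Finset.card_filter]
        congr 1
        ext p
        simp only [Finset.mem_filter, Finset.mem_offDiag, Finset.mem_univ, true_and]
        tauto
    _ = ∑ p ∈ Finset.univ.offDiag, ∑ B ∈ 𝓑, (if p.1 ∈ B ∧ p.2 ∈ B then 1 else 0) :=
        Finset.sum_comm
    _ = ∑ p ∈ (Finset.univ : Finset (Fin n)).offDiag, lam := by
        refine Finset.sum_congr rfl fun p hp => ?_
        rw [Finset.mem_offDiag] at hp
        rw [← Finset.card_filter]
        have hfe : 𝓑.filter (fun B => p.1 ∈ B ∧ p.2 ∈ B)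
            = 𝓑.filter (fun B => {p.1, p.2} ⊆ B) := by
          apply Finset.filter_congr
          intro B _
          simp [Finset.insert_subset_iff]
        rw [hfe]
        exact hpair {p.1, p.2}
          (by rw [Finset.card_insert_of_notMem (by simp [hp.2.2]), Finset.card_singleton])
    _ = lam * (n * N) := by
        rw [Finset.sum_const, smul_eq_mul, Finset.offDiag_card, Finset.card_univ,
          Fintype.card_fin, mul_comm]
        congr 1
        rw [hn]
        have : (N+1) * (N+1) = (N+1)*N + (N+1) := by ring
        rw [this, Nat.add_sub_cancel]

private lemma qs_contra {n k lam r : ℕ} (𝓑 : Finset (Finset (Fin n)))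
    (hcard : ∀ B ∈ 𝓑, B.card = k)
    (hpair : ∀ p : Finset (Fin n), p.card = 2 → (𝓑.filter fun B => p ⊆ B).card = lam)
    (hint : ∀ B₁ ∈ 𝓑, ∀ B₂ ∈ 𝓑, B₁ ≠ B₂ → (B₁ ∩ B₂).card % 2 = 0)
    (hr : ∀ a : Fin n, (𝓑.filter fun B => a ∈ B).card = r)
    (hk4 : k % 4 = 2) (hl4 : lam % 4 = 2)
    (hr8 : r % 8 = (lam + 4) % 8)
    (hb8 : 𝓑.card % 8 = 4) : False := by
  classical
  obtain ⟨P, hP⟩ := exists_odd_transversal 𝓑 hcard hk4 hint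
  -- exact counting identity
  have key : (∑ B ∈ 𝓑, ((B ∩ P).card)^2) = P.card * r + P.offDiag.card * lam := by
    calc (∑ B ∈ 𝓑, ((B ∩ P).card)^2)
        = ∑ B ∈ 𝓑, ∑ p ∈ P ×ˢ P, ((if p.1 ∈ B then 1 else 0) * (if p.2 ∈ B then 1 else 0)) := by
          refine Finset.sum_congr rfl fun B _ => ?_
          have h1 : (B ∩ P).card = ∑ a ∈ P, (if a ∈ B then 1 else 0) := by
            rw [← Finset.card_filter]
            congr 1
            ext a
            simp [Finset.mem_inter, and_comm]
          rw [h1, pow_two, Finset.sum_mul_sum, ← Finset.sum_product']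
      _ = ∑ p ∈ P ×ˢ P, ∑ B ∈ 𝓑, ((if p.1 ∈ B then 1 else 0) * (if p.2 ∈ B then 1 else 0)) :=
          Finset.sum_comm
      _ = ∑ p ∈ P ×ˢ P, (𝓑.filter fun B => p.1 ∈ B ∧ p.2 ∈ B).card := by
          refine Finset.sum_congr rfl fun p _ => ?_
          rw [Finset.card_filter]
          refine Finset.sum_congr rfl fun B _ => ?_
          by_cases h1 : p.1 ∈ B <;> by_cases h2 : p.2 ∈ B <;> simp [h1, h2]
      _ = P.card * r + P.offDiag.card * lam := by
          rw [← Finset.diag_union_offDiag P,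
            Finset.sum_union (Finset.disjoint_diag_offDiag P), Finset.sum_diag]
          congr 1
          · calc ∑ a ∈ P, (𝓑.filter fun B => ((a, a) : Fin n × Fin n).1 ∈ B ∧ ((a, a) : Fin n × Fin n).2 ∈ B).card
                = ∑ a ∈ P, r := by
                  refine Finset.sum_congr rfl fun a _ => ?_
                  have hfe : 𝓑.filter (fun B => a ∈ B ∧ a ∈ B) = 𝓑.filter (fun B => a ∈ B) := by
                    apply Finset.filter_congr; intro B _; simp
                  rw [hfe]
                  exact hr a
              _ = P.card * r := by rw [Finset.sum_const, smul_eq_mul]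
          · calc ∑ p ∈ P.offDiag, (𝓑.filter fun B => p.1 ∈ B ∧ p.2 ∈ B).card
                = ∑ p ∈ P.offDiag, lam := by
                  refine Finset.sum_congr rfl fun p hp => ?_
                  rw [Finset.mem_offDiag] at hp
                  have hfe : 𝓑.filter (fun B => p.1 ∈ B ∧ p.2 ∈ B)
                      = 𝓑.filter (fun B => {p.1, p.2} ⊆ B) := by
                    apply Finset.filter_congr; intro B _; simp [Finset.insert_subset_iff]
                  rw [hfe]
                  exact hpair {p.1, p.2}
                    (by rw [Finset.card_insert_of_notMem (by simp [hp.2.2]), Finset.card_singleton])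
              _ = P.offDiag.card * lam := by rw [Finset.sum_const, smul_eq_mul]
  -- cast to ZMod 8
  have hcast : ((∑ B ∈ 𝓑, ((B ∩ P).card)^2 : ℕ) : ZMod 8) = 4 := by
    push_cast
    have h1 : ∀ B ∈ 𝓑, (((B ∩ P).card : ZMod 8))^2 = 1 := fun B hB => oddsq8 _ (hP B hB)
    rw [Finset.sum_congr rfl h1, Finset.sum_const, nsmul_eq_mul, mul_one]
    rw [← ZMod.natCast_mod, hb8]
    norm_num
  rw [key] at hcast
  push_cast at hcast
  -- r ≡ lam + 4, lam ∈ {2, 6} in ZMod 8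
  have hrl : (r : ZMod 8) = (lam : ZMod 8) + 4 := by
    calc (r : ZMod 8) = ((r % 8 : ℕ) : ZMod 8) := (ZMod.natCast_mod r 8).symm
      _ = (((lam + 4) % 8 : ℕ) : ZMod 8) := by rw [hr8]
      _ = ((lam + 4 : ℕ) : ZMod 8) := ZMod.natCast_mod _ 8
      _ = (lam : ZMod 8) + 4 := by push_cast; ring
  have hlv : (lam : ZMod 8) = 2 ∨ (lam : ZMod 8) = 6 := by
    have h26 : lam % 8 = 2 ∨ lam % 8 = 6 := by omega
    rcases h26 with h | h
    · left
      calc (lam : ZMod 8) = ((lam % 8 : ℕ) : ZMod 8) := (ZMod.natCast_mod lam 8).symm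
        _ = 2 := by rw [h]; norm_num
    · right
      calc (lam : ZMod 8) = ((lam % 8 : ℕ) : ZMod 8) := (ZMod.natCast_mod lam 8).symm
        _ = 6 := by rw [h]; norm_num
  -- offDiag card cast
  have hoff : ((P.offDiag.card : ℕ) : ZMod 8)
      = (P.card : ZMod 8) * (P.card : ZMod 8) - (P.card : ZMod 8) := by
    rw [Finset.offDiag_card]
    have hle : P.card ≤ P.card * P.card := by
      rcases Nat.eq_zero_or_pos P.card with h | h
      · rw [h]
      · exact Nat.le_mul_of_pos_left _ h
    rw [Nat.cast_sub hle]
    push_cast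
    ring
  rw [hoff, hrl] at hcast
  -- final decidable check
  have hdec : ∀ x l : ZMod 8, (l = 2 ∨ l = 6) →
      x * (l + 4) + (x * x - x) * l ≠ 4 := by decide
  exact hdec _ _ hlv hcast

/-- **Proposition 10.4 (Gillespie).** (i) For `i ≡ 2 (mod 4)` there is no quasi-symmetric
`2-(2i(2i+1), i(2i+1), i(2i-1)(i+1); i²+i, i²)` design.  (ii) For `i ≡ 4 (mod 8)` there is
no quasi-symmetric `2-(d, k, λ; s₁, s₂)` design with the Family-1 parameters
`d = i(i³+6i²+11i+5)`, `2k = i(i³+5i²+7i+1)`, `4λ = i(i+2)(i²+2i-1)(i³+5i²+7i+1)`,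
`4s₁ = i(i+2)(i+1)²`, `4s₂ = i(i³+4i²+3i-4)`. -/
theorem stmt_18 :
    (∀ i : ℕ, 0 < i → i % 4 = 2 →
      ¬ ∃ 𝓑 : Finset (Finset (Fin (2 * i * (2 * i + 1)))),
        (∀ B ∈ 𝓑, B.card = i * (2 * i + 1)) ∧
        (∀ p : Finset (Fin (2 * i * (2 * i + 1))), p.card = 2 →
          (𝓑.filter fun B => p ⊆ B).card = i * (2 * i - 1) * (i + 1)) ∧
        (∀ B₁ ∈ 𝓑, ∀ B₂ ∈ 𝓑, B₁ ≠ B₂ →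
          (B₁ ∩ B₂).card = i ^ 2 + i ∨ (B₁ ∩ B₂).card = i ^ 2) ∧
        (∃ B₁ ∈ 𝓑, ∃ B₂ ∈ 𝓑, B₁ ≠ B₂ ∧ (B₁ ∩ B₂).card = i ^ 2 + i) ∧
        (∃ B₁ ∈ 𝓑, ∃ B₂ ∈ 𝓑, B₁ ≠ B₂ ∧ (B₁ ∩ B₂).card = i ^ 2)) ∧
    (∀ i : ℕ, 0 < i → i % 8 = 4 →
      ∀ k lam s₁ s₂ : ℕ,
        2 * k = i * (i ^ 3 + 5 * i ^ 2 + 7 * i + 1) →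
        4 * lam = i * (i + 2) * (i ^ 2 + 2 * i - 1) * (i ^ 3 + 5 * i ^ 2 + 7 * i + 1) →
        4 * s₁ = i * (i + 2) * (i + 1) ^ 2 →
        4 * s₂ = i * (i ^ 3 + 4 * i ^ 2 + 3 * i - 4) →
        ¬ ∃ 𝓑 : Finset (Finset (Fin (i * (i ^ 3 + 6 * i ^ 2 + 11 * i + 5)))),
          (∀ B ∈ 𝓑, B.card = k) ∧
          (∀ p : Finset (Fin (i * (i ^ 3 + 6 * i ^ 2 + 11 * i + 5))), p.card = 2 →
            (𝓑.filter fun B => p ⊆ B).card = lam) ∧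
          (∀ B₁ ∈ 𝓑, ∀ B₂ ∈ 𝓑, B₁ ≠ B₂ →
            (B₁ ∩ B₂).card = s₁ ∨ (B₁ ∩ B₂).card = s₂) ∧
          (∃ B₁ ∈ 𝓑, ∃ B₂ ∈ 𝓑, B₁ ≠ B₂ ∧ (B₁ ∩ B₂).card = s₁) ∧
          (∃ B₁ ∈ 𝓑, ∃ B₂ ∈ 𝓑, B₁ ≠ B₂ ∧ (B₁ ∩ B₂).card = s₂)) := by
  constructor
  · -- Part (i)
    rintro i hi hmod ⟨𝓑, hcard, hpair, hints, -, -⟩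
    obtain ⟨t, ht⟩ : ∃ t, i = 4*t + 2 := ⟨(i - 2)/4, by omega⟩
    -- polynomial parameter values
    have hlam_eq : i*(2*i - 1)*(i+1) = 128*t^3 + 208*t^2 + 108*t + 18 := by
      have h1 : 2*i - 1 = 8*t + 3 := by omega
      rw [h1, ht]; ring
    have hpair' : ∀ p : Finset (Fin (2*i*(2*i+1))), p.card = 2 →
        (𝓑.filter fun B => p ⊆ B).card = 128*t^3 + 208*t^2 + 108*t + 18 :=
      fun p hp => (hpair p hp).trans hlam_eq
    have hint' : ∀ B₁ ∈ 𝓑, ∀ B₂ ∈ 𝓑, B₁ ≠ B₂ → (B₁ ∩ B₂).card % 2 = 0 := by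
      intro B₁ h₁ B₂ h₂ hne
      rcases hints B₁ h₁ B₂ h₂ hne with h | h <;> rw [h]
      · obtain ⟨m, hm⟩ : ∃ m, i^2 + i = 2*m := ⟨8*t^2 + 10*t + 3, by rw [ht]; ring⟩
        rw [hm]; omega
      · obtain ⟨m, hm⟩ : ∃ m, i^2 = 2*m := ⟨8*t^2 + 8*t + 2, by rw [ht]; ring⟩
        rw [hm]; omega
    have hr : ∀ a : Fin (2*i*(2*i+1)), (𝓑.filter fun B => a ∈ B).card
        = 256*t^3 + 416*t^2 + 220*t + 38 := by
      refine point_degree (K := 32*t^2 + 36*t + 9) (N := 64*t^2 + 72*t + 19) 𝓑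
        (by rw [ht]; ring) (by rw [ht]; ring) (by positivity) hcard hpair' (by ring)
    have hk4 : (i*(2*i+1)) % 4 = 2 := by
      obtain ⟨q, hq⟩ : ∃ q, i*(2*i+1) = 4*q + 2 := ⟨8*t^2 + 9*t + 2, by rw [ht]; ring⟩
      rw [hq]; omega
    have hl4 : (128*t^3 + 208*t^2 + 108*t + 18) % 4 = 2 := by
      obtain ⟨q, hq⟩ : ∃ q, 128*t^3 + 208*t^2 + 108*t + 18 = 4*q + 2 :=
        ⟨32*t^3 + 52*t^2 + 27*t + 4, by ring⟩
      rw [hq]; omega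
    have hr8 : (256*t^3 + 416*t^2 + 220*t + 38) % 8
        = ((128*t^3 + 208*t^2 + 108*t + 18) + 4) % 8 := by
      obtain ⟨q, hq⟩ : ∃ q, 256*t^3 + 416*t^2 + 220*t + 38
          = (128*t^3 + 208*t^2 + 108*t + 18) + 4 + 8*q :=
        ⟨16*t^3 + 26*t^2 + 14*t + 2, by ring⟩
      rw [hq]; omega
    have hbc := block_count (K := 32*t^2 + 36*t + 9) (N := 64*t^2 + 72*t + 19) 𝓑
      (by rw [ht]; ring) (by rw [ht]; ring) hcard hpair'
    have hbval : (512*t^3 + 832*t^2 + 440*t + 76) * ((i*(2*i+1)) * (32*t^2 + 36*t + 9))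
        = (128*t^3 + 208*t^2 + 108*t + 18) * ((2*i*(2*i+1)) * (64*t^2 + 72*t + 19)) := by
      rw [ht]; ring
    have hbcard : 𝓑.card = 512*t^3 + 832*t^2 + 440*t + 76 := by
      refine Nat.eq_of_mul_eq_mul_right
        (show 0 < (i*(2*i+1)) * (32*t^2 + 36*t + 9) by rw [ht]; positivity) ?_
      rw [hbc, hbval]
    have hb8 : 𝓑.card % 8 = 4 := by
      rw [hbcard]
      obtain ⟨q, hq⟩ : ∃ q, 512*t^3 + 832*t^2 + 440*t + 76 = 8*q + 4 :=
        ⟨64*t^3 + 104*t^2 + 55*t + 9, by ring⟩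
      rw [hq]; omega
    exact qs_contra 𝓑 hcard hpair' hint' hr hk4 hl4 hr8 hb8
  · -- Part (ii)
    rintro i hi hmod k lam s₁ s₂ h2k h4lam h4s1 h4s2 ⟨𝓑, hcard, hpair, hints, -, -⟩
    obtain ⟨t, ht⟩ : ∃ t, i = 8*t + 4 := ⟨(i - 4)/8, by omega⟩
    -- solve for k
    have hk_eq : k = 2048*t^4 + 5376*t^3 + 5216*t^2 + 2212*t + 346 := by
      have h1 : i*(i^3 + 5*i^2 + 7*i + 1)
          = 2*(2048*t^4 + 5376*t^3 + 5216*t^2 + 2212*t + 346) := by rw [ht]; ring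
      have h2 : 2*k = 2*(2048*t^4 + 5376*t^3 + 5216*t^2 + 2212*t + 346) := h2k.trans h1
      omega
    -- solve for lam
    have e1 : i^2 + 2*i - 1 = 64*t^2 + 80*t + 23 := by
      have h1 : i^2 + 2*i = 64*t^2 + 80*t + 24 := by rw [ht]; ring
      omega
    have hlam_eq : lam = 524288*t^7 + 2424832*t^6 + 4767744*t^5 + 5163008*t^4
        + 3323776*t^3 + 1271440*t^2 + 267500*t + 23874 := by
      rw [e1] at h4lam
      have h1 : i*(i+2)*(64*t^2 + 80*t + 23)*(i^3 + 5*i^2 + 7*i + 1)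
          = 4*(524288*t^7 + 2424832*t^6 + 4767744*t^5 + 5163008*t^4
            + 3323776*t^3 + 1271440*t^2 + 267500*t + 23874) := by rw [ht]; ring
      have h2 := h4lam.trans h1
      omega
    -- s₁, s₂ are even
    have hs1_even : s₁ % 2 = 0 := by
      have h1 : i*(i+2)*(i+1)^2
          = 4*(2*(512*t^4 + 1280*t^3 + 1192*t^2 + 490*t + 75)) := by rw [ht]; ring
      have h2 := h4s1.trans h1
      omega
    have hs2_even : s₂ % 2 = 0 := by
      have e2 : i^3 + 4*i^2 + 3*i - 4 = 512*t^3 + 1024*t^2 + 664*t + 136 := by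
        have h1 : i^3 + 4*i^2 + 3*i = 512*t^3 + 1024*t^2 + 664*t + 140 := by rw [ht]; ring
        omega
      rw [e2] at h4s2
      have h1 : i*(512*t^3 + 1024*t^2 + 664*t + 136)
          = 4*(2*(512*t^4 + 1280*t^3 + 1176*t^2 + 468*t + 68)) := by rw [ht]; ring
      have h2 := h4s2.trans h1
      omega
    have hint' : ∀ B₁ ∈ 𝓑, ∀ B₂ ∈ 𝓑, B₁ ≠ B₂ → (B₁ ∩ B₂).card % 2 = 0 := by
      intro B₁ h₁ B₂ h₂ hne
      rcases hints B₁ h₁ B₂ h₂ hne with h | h <;> rw [h]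
      · exact hs1_even
      · exact hs2_even
    have hcard' : ∀ B ∈ 𝓑, B.card = 2048*t^4 + 5376*t^3 + 5216*t^2 + 2212*t + 346 :=
      fun B hB => (hcard B hB).trans hk_eq
    have hpair' : ∀ p : Finset (Fin (i*(i^3 + 6*i^2 + 11*i + 5))), p.card = 2 →
        (𝓑.filter fun B => p ⊆ B).card = 524288*t^7 + 2424832*t^6 + 4767744*t^5
          + 5163008*t^4 + 3323776*t^3 + 1271440*t^2 + 267500*t + 23874 :=
      fun p hp => (hpair p hp).trans hlam_eq
    have hr : ∀ a : Fin (i*(i^3 + 6*i^2 + 11*i + 5)), (𝓑.filter fun B => a ∈ B).card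
        = 1048576*t^7 + 4980736*t^6 + 10059776*t^5 + 11192320*t^4 + 7404032*t^3
          + 2910944*t^2 + 629596*t + 57782 := by
      refine point_degree
        (K := 2048*t^4 + 5376*t^3 + 5216*t^2 + 2212*t + 345)
        (N := 4096*t^4 + 11264*t^3 + 11456*t^2 + 5096*t + 835) 𝓑
        (by rw [ht]; ring) (by ring) (by positivity) hcard' hpair' (by ring)
    have hk4 : (2048*t^4 + 5376*t^3 + 5216*t^2 + 2212*t + 346) % 4 = 2 := by
      obtain ⟨q, hq⟩ : ∃ q, 2048*t^4 + 5376*t^3 + 5216*t^2 + 2212*t + 346 = 4*q + 2 :=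
        ⟨512*t^4 + 1344*t^3 + 1304*t^2 + 553*t + 86, by ring⟩
      rw [hq]; omega
    have hl4 : (524288*t^7 + 2424832*t^6 + 4767744*t^5 + 5163008*t^4
        + 3323776*t^3 + 1271440*t^2 + 267500*t + 23874) % 4 = 2 := by
      obtain ⟨q, hq⟩ : ∃ q, 524288*t^7 + 2424832*t^6 + 4767744*t^5 + 5163008*t^4
          + 3323776*t^3 + 1271440*t^2 + 267500*t + 23874 = 4*q + 2 :=
        ⟨131072*t^7 + 606208*t^6 + 1191936*t^5 + 1290752*t^4 + 830944*t^3
          + 317860*t^2 + 66875*t + 5968, by ring⟩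
      rw [hq]; omega
    have hr8 : (1048576*t^7 + 4980736*t^6 + 10059776*t^5 + 11192320*t^4 + 7404032*t^3
        + 2910944*t^2 + 629596*t + 57782) % 8
        = ((524288*t^7 + 2424832*t^6 + 4767744*t^5 + 5163008*t^4
          + 3323776*t^3 + 1271440*t^2 + 267500*t + 23874) + 4) % 8 := by
      obtain ⟨q, hq⟩ : ∃ q, 1048576*t^7 + 4980736*t^6 + 10059776*t^5 + 11192320*t^4
          + 7404032*t^3 + 2910944*t^2 + 629596*t + 57782
          = (524288*t^7 + 2424832*t^6 + 4767744*t^5 + 5163008*t^4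
            + 3323776*t^3 + 1271440*t^2 + 267500*t + 23874) + 4 + 8*q :=
        ⟨65536*t^7 + 319488*t^6 + 661504*t^5 + 753664*t^4 + 510032*t^3
          + 204938*t^2 + 45262*t + 4238, by ring⟩
      rw [hq]; omega
    have hbc := block_count
      (K := 2048*t^4 + 5376*t^3 + 5216*t^2 + 2212*t + 345)
      (N := 4096*t^4 + 11264*t^3 + 11456*t^2 + 5096*t + 835) 𝓑
      (by rw [ht]; ring) (by ring) hcard' hpair'
    have hbval : (2097152*t^7 + 10223616*t^6 + 21200896*t^5 + 24227840*t^4 + 16468480*t^3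
          + 6654912*t^2 + 1479704*t + 139612)
          * ((2048*t^4 + 5376*t^3 + 5216*t^2 + 2212*t + 346)
            * (2048*t^4 + 5376*t^3 + 5216*t^2 + 2212*t + 345))
        = (524288*t^7 + 2424832*t^6 + 4767744*t^5 + 5163008*t^4
          + 3323776*t^3 + 1271440*t^2 + 267500*t + 23874)
          * ((i*(i^3 + 6*i^2 + 11*i + 5))
            * (4096*t^4 + 11264*t^3 + 11456*t^2 + 5096*t + 835)) := by
      rw [ht]; ring
    have hbcard : 𝓑.card = 2097152*t^7 + 10223616*t^6 + 21200896*t^5 + 24227840*t^4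
        + 16468480*t^3 + 6654912*t^2 + 1479704*t + 139612 := by
      refine Nat.eq_of_mul_eq_mul_right
        (show 0 < (2048*t^4 + 5376*t^3 + 5216*t^2 + 2212*t + 346)
          * (2048*t^4 + 5376*t^3 + 5216*t^2 + 2212*t + 345) by positivity) ?_
      rw [hbc, hbval]
    have hb8 : 𝓑.card % 8 = 4 := by
      rw [hbcard]
      obtain ⟨q, hq⟩ : ∃ q, 2097152*t^7 + 10223616*t^6 + 21200896*t^5 + 24227840*t^4
          + 16468480*t^3 + 6654912*t^2 + 1479704*t + 139612 = 8*q + 4 :=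
        ⟨262144*t^7 + 1277952*t^6 + 2650112*t^5 + 3028480*t^4 + 2058560*t^3
          + 831864*t^2 + 184963*t + 17451, by ring⟩
      rw [hq]; omega
    exact qs_contra 𝓑 hcard' hpair' hint' hr hk4 hl4 hr8 hb8
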